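/- Let V be a gl_n-module, Ω the D_n-module ℂ[d_1,…,d_n] with ∂/∂x_i·f(d) = −f(d+e_i), x_i·f(d) = −f(d−e_i)d_i, and make T(Ω,V) = Ω ⊗ V an sl_{n+1}-module via the homomorphism ψ (with h_k ↦ x_k∂_k⊗1 + 1⊗E_{kk}, e_{ij} ↦ x_i∂_j⊗1 + 1⊗E_{ij}, e_{0j} ↦ −∂_j⊗1, e_{i0} ↦ Σ_q x_q⊗E_{iq} + x_iΣ_q x_q∂_q⊗1 + x_i⊗I_n). Then the Whittaker subspace {w ∈ T(Ω,V) : e_{0j} w = w for all j} equals 1 ⊗ V, and on it the elements x_{ij} = e_{ij}e_{0i}e_{0j}^{-1} − h_i act by x_{ij}(1⊗v) = 1 ⊗ (E_{ij} − E_{ii})v for 1 ≤ i ≠ j ≤ n. -/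

import Mathlib

open Matrix MvPolynomial

/-- The shift operator `f(d) ↦ f(d + c e_i)` on `Ω = ℂ[d_1,…,d_n]`. -/
noncomputable def shiftOp (n : ℕ) (c : ℂ) (i : Fin n) :
    Module.End ℂ (MvPolynomial (Fin n) ℂ) :=
  (MvPolynomial.aeval fun t => MvPolynomial.X t + if t = i then MvPolynomial.C c else 0).toLinearMap

section
variable (n : ℕ) {V : Type*} [AddCommGroup V] [Module ℂ V]
  (ρ : Matrix (Fin n) (Fin n) ℂ →ₗ[ℂ] Module.End ℂ V)

/-- Action of `e_{0j} = -∂_j ⊗ 1` on `T(Ω,V) = Ω ⊗ V`: the shift `f(d) ↦ f(d + e_j)`. -/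
noncomputable def opE0 (j : Fin n) :
    Module.End ℂ (TensorProduct ℂ (MvPolynomial (Fin n) ℂ) V) :=
  TensorProduct.map (shiftOp n 1 j) LinearMap.id

/-- The inverse `e_{0j}⁻¹`: the shift `f(d) ↦ f(d - e_j)`. -/
noncomputable def opE0inv (j : Fin n) :
    Module.End ℂ (TensorProduct ℂ (MvPolynomial (Fin n) ℂ) V) :=
  TensorProduct.map (shiftOp n (-1) j) LinearMap.id

/-- Action of `e_{ij} = x_i ∂_j ⊗ 1 + 1 ⊗ E_{ij}` on `T(Ω,V)`:
`f(d) ⊗ v ↦ f(d + e_j - e_i) d_i ⊗ v + f(d) ⊗ E_{ij} v`. -/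
noncomputable def opE (i j : Fin n) :
    Module.End ℂ (TensorProduct ℂ (MvPolynomial (Fin n) ℂ) V) :=
  TensorProduct.map (LinearMap.mulLeft ℂ (X i) ∘ₗ shiftOp n 1 j ∘ₗ shiftOp n (-1) i)
      LinearMap.id
    + TensorProduct.map LinearMap.id (ρ (Matrix.single i j 1))

/-- Action of `h_i = x_i ∂_i ⊗ 1 + 1 ⊗ E_{ii}` on `T(Ω,V)`:
`f(d) ⊗ v ↦ d_i f(d) ⊗ v + f(d) ⊗ E_{ii} v`. -/
noncomputable def opH (i : Fin n) :
    Module.End ℂ (TensorProduct ℂ (MvPolynomial (Fin n) ℂ) V) :=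
  TensorProduct.map (LinearMap.mulLeft ℂ (X i)) LinearMap.id
    + TensorProduct.map LinearMap.id (ρ (Matrix.single i i 1))

end

lemma shiftOp_comp (n : ℕ) (c c' : ℂ) (i : Fin n) :
    shiftOp n c i ∘ₗ shiftOp n c' i = shiftOp n (c + c') i := by
  unfold shiftOp
  rw [← AlgHom.comp_toLinearMap, MvPolynomial.comp_aeval]
  have hfun : (fun t => (MvPolynomial.aeval fun t' => MvPolynomial.X t' +
        if t' = i then MvPolynomial.C c else 0) (MvPolynomial.X t + if t = i then MvPolynomial.C c' else 0))
      = fun t => MvPolynomial.X t + if t = i then MvPolynomial.C (c + c') else 0 := by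
    funext t
    by_cases h : t = i <;>
      simp [h, MvPolynomial.algebraMap_eq, C_add, add_assoc]
  rw [hfun]

lemma shiftOp_zero (n : ℕ) (i : Fin n) : shiftOp n 0 i = LinearMap.id := by
  unfold shiftOp
  simp [aeval_X_left]

lemma shiftOp_one' (n : ℕ) (c : ℂ) (i : Fin n) : shiftOp n c i 1 = 1 := by
  simp [shiftOp]

lemma aeval_eq_eval' {n : ℕ} (x : Fin n → ℂ) (p : MvPolynomial (Fin n) ℂ) :
    aeval x p = eval x p := by
  rw [aeval_def]; rfl

/-- A polynomial fixed by all unit shifts is constant. -/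
lemma shift_fixed_const {n : ℕ} (f : MvPolynomial (Fin n) ℂ)
    (h : ∀ j, shiftOp n 1 j f = f) : f = C (eval 0 f) := by
  classical
  have hev : ∀ (j : Fin n) (x : Fin n → ℂ),
      eval (fun t => x t + if t = j then 1 else 0) f = eval x f := by
    intro j x
    have h1 := congrArg (MvPolynomial.aeval x) (h j)
    rw [shiftOp, AlgHom.toLinearMap_apply, ← AlgHom.comp_apply, MvPolynomial.comp_aeval] at h1
    rw [aeval_eq_eval', aeval_eq_eval'] at h1
    have hfun : (fun t => (MvPolynomial.aeval (R := ℂ) x)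
          (MvPolynomial.X t + if t = j then MvPolynomial.C (1:ℂ) else 0))
        = fun t => x t + if t = j then (1:ℂ) else 0 := by
      funext t
      by_cases ht : t = j <;> simp [ht]
    rw [← hfun]
    exact h1
  have key : ∀ (j : Fin n) (x : Fin n → ℂ) (s : ℂ),
      eval (Function.update x j s) f = eval (Function.update x j 0) f := by
    intro j x s
    set q : Polynomial ℂ :=
      MvPolynomial.aeval (fun t => if t = j then Polynomial.X else Polynomial.C (x t)) f with hq
    have hqe : ∀ s : ℂ, q.eval s = eval (Function.update x j s) f := by
      intro s
      have h1 : Polynomial.aeval s q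
          = MvPolynomial.aeval (fun t =>
              Polynomial.aeval s (if t = j then Polynomial.X else Polynomial.C (x t))) f := by
        rw [hq, ← AlgHom.comp_apply, MvPolynomial.comp_aeval]
      rw [← Polynomial.coe_aeval_eq_eval, h1, aeval_eq_eval']
      have hfun : (fun t => (Polynomial.aeval s)
            (if t = j then Polynomial.X else Polynomial.C (x t)))
          = Function.update x j s := by
        funext t
        by_cases ht : t = j <;> simp [ht, Function.update_apply]
      rw [hfun]
    have hper : ∀ s : ℂ, q.eval (s + 1) = q.eval s := by
      intro s
      rw [hqe, hqe]
      have h2 := hev j (Function.update x j s)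
      rw [show (fun t => Function.update x j s t + if t = j then (1:ℂ) else 0)
          = Function.update x j (s + 1) from ?_] at h2
      · exact h2
      · funext t
        by_cases ht : t = j <;> simp [ht, Function.update_apply]
    have hq0 : ∀ s : ℂ, q.eval s = q.eval 0 := by
      have hr : q - Polynomial.C (q.eval 0) = 0 := by
        apply Polynomial.eq_zero_of_infinite_isRoot
        refine Set.Infinite.mono ?_ (Set.infinite_range_of_injective
          (Nat.cast_injective (R := ℂ)))
        rintro _ ⟨m, rfl⟩
        have hm : q.eval (m : ℂ) = q.eval 0 := by
          induction m with
          | zero => simp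
          | succ k ih => rw [Nat.cast_succ, hper, ih]
        simp [Polynomial.IsRoot, hm]
      intro s
      have h3 := congrArg (Polynomial.eval s) hr
      simp only [Polynomial.eval_sub, Polynomial.eval_C, Polynomial.eval_zero,
        sub_eq_zero] at h3
      exact h3
    rw [← hqe, ← hqe, hq0]
  have claim : ∀ (s : Finset (Fin n)) (x : Fin n → ℂ),
      eval (fun t => if t ∈ s then 0 else x t) f = eval x f := by
    intro s
    induction s using Finset.induction_on with
    | empty => intro x; simp
    | insert j s hj ih =>
      intro x
      have h1 : (fun t => if t ∈ insert j s then (0:ℂ) else x t)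
          = Function.update (fun t => if t ∈ s then (0:ℂ) else x t) j 0 := by
        funext t
        by_cases ht : t = j <;> simp [ht, Function.update_apply, hj]
      rw [h1]
      have h2 := key j (fun t => if t ∈ s then (0:ℂ) else x t)
        (if j ∈ s then (0:ℂ) else x j)
      have h3 : Function.update (fun t => if t ∈ s then (0:ℂ) else x t) j
          (if j ∈ s then (0:ℂ) else x j) = fun t => if t ∈ s then (0:ℂ) else x t := by
        funext t
        by_cases ht : t = j <;> simp [ht, Function.update_apply]
      rw [h3] at h2
      rw [← h2, ih x]
  apply MvPolynomial.funext
  intro x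
  rw [eval_C, ← claim Finset.univ x]
  have hfun : (fun t => if t ∈ Finset.univ then (0:ℂ) else x t) = (0 : Fin n → ℂ) := by
    funext t
    simp
  rw [hfun]

set_option maxHeartbeats 2000000 in
set_option maxRecDepth 4000 in
/-- For a `gl_n`-module `V` and the `D_n`-module `Ω = ℂ[d_1,…,d_n]`, in the
`sl_{n+1}`-module `T(Ω,V) = Ω ⊗ V` (via `ψ`): the operators `e_{0j}` are invertible with
inverse the backwards shift, the Whittaker subspace `{w : e_{0j} w = w ∀ j}` equals `1 ⊗ V`,
and `x_{ij} = e_{ij} e_{0i} e_{0j}⁻¹ - h_i` acts on it by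
`x_{ij}(1 ⊗ v) = 1 ⊗ (E_{ij} - E_{ii}) v` for `1 ≤ i ≠ j ≤ n`. -/
theorem statement18 (n : ℕ) (V : Type*) [AddCommGroup V] [Module ℂ V]
    (ρ : Matrix (Fin n) (Fin n) ℂ →ₗ[ℂ] Module.End ℂ V)
    (hρ : ∀ x y : Matrix (Fin n) (Fin n) ℂ, ρ ⁅x, y⁆ = ⁅ρ x, ρ y⁆) :
    (∀ j : Fin n, opE0 n (V := V) j * opE0inv n (V := V) j = 1 ∧
      opE0inv n (V := V) j * opE0 n (V := V) j = 1) ∧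
    (⨅ j : Fin n, Module.End.eigenspace (opE0 n (V := V) j) 1) =
      LinearMap.range (TensorProduct.mk ℂ (MvPolynomial (Fin n) ℂ) V 1) ∧
    (∀ i j : Fin n, i ≠ j → ∀ v : V,
      (opE n ρ i j * opE0 n (V := V) i * opE0inv n (V := V) j - opH n ρ i)
          ((1 : MvPolynomial (Fin n) ℂ) ⊗ₜ[ℂ] v) =
        (1 : MvPolynomial (Fin n) ℂ) ⊗ₜ[ℂ]
          (ρ (Matrix.single i j 1 - Matrix.single i i 1) v)) := by
  classical
  have h1 : ∀ (j : Fin n) (c c' : ℂ), c + c' = 0 →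
      TensorProduct.map (shiftOp n c j) (LinearMap.id (R := ℂ) (M := V)) *
        TensorProduct.map (shiftOp n c' j) LinearMap.id = 1 := by
    intro j c c' hcc
    rw [Module.End.mul_eq_comp, ← TensorProduct.map_comp, shiftOp_comp, hcc, shiftOp_zero,
      LinearMap.id_comp, TensorProduct.map_id]
    rfl
  refine ⟨fun j => ⟨h1 j 1 (-1) (by ring), h1 j (-1) 1 (by ring)⟩, ?_, ?_⟩
  · set b := Module.Basis.ofVectorSpace ℂ V with hb
    set e : TensorProduct ℂ (MvPolynomial (Fin n) ℂ) V ≃ₗ[ℂ]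
        (↥(Module.Basis.ofVectorSpaceIndex ℂ V) →₀ MvPolynomial (Fin n) ℂ) :=
      (TensorProduct.congr (LinearEquiv.refl ℂ _) b.repr).trans
        (TensorProduct.finsuppScalarRight ℂ _ _ _) with he
    have hei : ∀ (i : Module.Basis.ofVectorSpaceIndex ℂ V) (g : MvPolynomial (Fin n) ℂ),
        e (g ⊗ₜ[ℂ] b i) = Finsupp.single i g := by
      intro i g
      simp [he, TensorProduct.congr_tmul, Module.Basis.repr_self,
        TensorProduct.finsuppScalarRight_apply_tmul, Finsupp.sum_single_index]
    have hsymm : ∀ (i : Module.Basis.ofVectorSpaceIndex ℂ V) (g : MvPolynomial (Fin n) ℂ),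
        e.symm (Finsupp.single i g) = g ⊗ₜ[ℂ] b i := by
      intro i g
      rw [← hei i g, LinearEquiv.symm_apply_apply]
    have hcomm : ∀ (j : Fin n),
        e.toLinearMap ∘ₗ opE0 n (V := V) j
          = Finsupp.mapRange.linearMap (shiftOp n 1 j) ∘ₗ e.toLinearMap := by
      intro j
      refine TensorProduct.ext (LinearMap.ext fun f => b.ext fun i => ?_)
      simp only [LinearMap.compr₂_apply, LinearMap.compr₂ₛₗ_apply, TensorProduct.mk_apply, LinearMap.comp_apply,
        LinearEquiv.coe_coe]
      rw [show opE0 n (V := V) j (f ⊗ₜ[ℂ] b i) = (shiftOp n 1 j f) ⊗ₜ[ℂ] b i from rfl,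
        hei, hei]
      simp [Finsupp.mapRange_single]
    apply le_antisymm
    · intro w hw
      simp only [Submodule.mem_iInf, Module.End.mem_eigenspace_iff, one_smul] at hw
      have hfix : ∀ i, ∀ j, shiftOp n 1 j ((e w) i) = (e w) i := by
        intro i j
        have h2 := LinearMap.congr_fun (hcomm j) w
        simp only [LinearMap.comp_apply, LinearEquiv.coe_coe] at h2
        rw [hw j] at h2
        have h3 := congrArg (fun p => p i) h2
        simpa [Finsupp.mapRange_apply] using h3.symm
      have hconst : ∀ i, (e w) i = C (eval 0 ((e w) i)) :=
        fun i => shift_fixed_const _ (hfix i)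
      have hw2 : w = (e w).sum fun i g => g ⊗ₜ[ℂ] (b i : V) := by
        conv_lhs => rw [← e.symm_apply_apply w, ← Finsupp.sum_single (e w), map_finsuppSum]
        exact Finsupp.sum_congr fun i _ => hsymm i _
      refine ⟨(e w).sum fun i g => (eval 0 g) • (b i : V), ?_⟩
      rw [TensorProduct.mk_apply]
      conv_rhs => rw [hw2]
      simp only [Finsupp.sum]
      rw [TensorProduct.tmul_sum]
      refine Finset.sum_congr rfl fun i _ => ?_
      conv_rhs => rw [hconst i]
      rw [TensorProduct.tmul_smul, TensorProduct.smul_tmul', smul_eq_C_mul, mul_one]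
    · rintro w ⟨v, rfl⟩
      simp only [Submodule.mem_iInf, Module.End.mem_eigenspace_iff, one_smul]
      intro j
      rw [TensorProduct.mk_apply]
      show TensorProduct.map (shiftOp n 1 j) LinearMap.id
        ((1 : MvPolynomial (Fin n) ℂ) ⊗ₜ[ℂ] v) = _
      rw [TensorProduct.map_tmul, shiftOp_one', LinearMap.id_apply]
  · intro i j hij v
    simp only [LinearMap.sub_apply, Module.End.mul_apply]
    rw [show opE0inv n (V := V) j ((1 : MvPolynomial (Fin n) ℂ) ⊗ₜ[ℂ] v)
        = (1 : MvPolynomial (Fin n) ℂ) ⊗ₜ[ℂ] v from by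
      simp [opE0inv, TensorProduct.map_tmul, shiftOp_one']]
    rw [show opE0 n (V := V) i ((1 : MvPolynomial (Fin n) ℂ) ⊗ₜ[ℂ] v)
        = (1 : MvPolynomial (Fin n) ℂ) ⊗ₜ[ℂ] v from by
      simp [opE0, TensorProduct.map_tmul, shiftOp_one']]
    simp only [opE, opH, LinearMap.add_apply, TensorProduct.map_tmul, LinearMap.comp_apply,
      LinearMap.id_apply, shiftOp_one', LinearMap.mulLeft_apply, mul_one, map_sub,
      LinearMap.sub_apply, TensorProduct.tmul_sub]
    abel
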